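/- Let k ∈ ℕ, let M, M' ∈ 𝔽₂^{k×k} be skew-symmetric, and let w, w' ∈ 𝔽₂^k. Define u_{M,w}(x) := 2^{−k/2}·(−1)^{Q_M(x)+wᵀx} and u_{M',w'}(x) := 2^{−k/2}·(−1)^{Q_{M'}(x)+w'ᵀx} in ℝ^{𝔽₂^k}. Then ⟨u_{M,w}, u_{M',w'}⟩² = 2^{−k}·∑_{p ∈ ker(M+M')} (−1)^{Q_M(p)+Q_{M'}(p)+(w+w')ᵀp}, where ker(M+M') := {p ∈ 𝔽₂^k : (M+M')p = 0}. -/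

import Mathlib

open Matrix

/-- The quadratic form `Q_M(x) = xᵀ M̃ x` where `M̃` is the strictly upper-triangular
part of `M`. -/
def Qform (k : ℕ) (M : Matrix (Fin k) (Fin k) (ZMod 2)) (x : Fin k → ZMod 2) : ZMod 2 :=
  x ⬝ᵥ (Matrix.of fun i j : Fin k => if (i : ℕ) < (j : ℕ) then M i j else 0).mulVec x

/-- The vector `u_{M,w} ∈ ℝ^{𝔽₂^k}` with `u_{M,w}(x) = 2^{−k/2}·(−1)^{Q_M(x)+wᵀx}`. -/
noncomputable def kerdockVec (k : ℕ) (M : Matrix (Fin k) (Fin k) (ZMod 2))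
    (w : Fin k → ZMod 2) (x : Fin k → ZMod 2) : ℝ :=
  ((Real.sqrt 2)⁻¹) ^ k * (-1 : ℝ) ^ (Qform k M x + w ⬝ᵥ x).val

noncomputable def chi (a : ZMod 2) : ℝ := (-1) ^ a.val

lemma chi_add (a b : ZMod 2) : chi (a + b) = chi a * chi b := by
  unfold chi
  rw [ZMod.val_add, ← neg_one_pow_eq_pow_mod_two, pow_add]

lemma chi_zero : chi 0 = 1 := rfl
lemma chi_one : chi 1 = -1 := by norm_num [chi, ZMod.val_one]

lemma sum_chi (k : ℕ) (c : Fin k → ZMod 2) :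
    ∑ x : Fin k → ZMod 2, chi (x ⬝ᵥ c) = if c = 0 then 2 ^ k else 0 := by
  split_ifs with hc
  · subst hc
    simp [chi_zero, dotProduct_zero, Finset.card_univ]
  · obtain ⟨i, hi⟩ := Function.ne_iff.mp hc
    have hci : c i = 1 := by
      have h2 : ∀ a : ZMod 2, a ≠ 0 → a = 1 := by decide
      exact h2 _ (by simpa using hi)
    apply Finset.sum_ninvolution (fun x => x + Pi.single i 1)
    · intro x
      have h3 : (x + Pi.single i 1) ⬝ᵥ c = x ⬝ᵥ c + 1 := by
        rw [add_dotProduct, single_dotProduct, hci, one_mul]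
      rw [h3, chi_add, chi_one]
      ring
    · intro x _ h
      have := congrFun h i
      simp [Pi.single_eq_same] at this
    · intro x; exact Finset.mem_univ _
    · intro x
      ext j
      simp only [Pi.add_apply]
      rw [add_assoc]
      have h4 : (Pi.single i 1 : Fin k → ZMod 2) j + (Pi.single i 1 : Fin k → ZMod 2) j = 0 := by
        have h5 : ∀ a : ZMod 2, a + a = 0 := by decide
        exact h5 _
      rw [h4, add_zero]

lemma Bsum (k : ℕ) (M : Matrix (Fin k) (Fin k) (ZMod 2))
    (hdiag : ∀ i, M i i = 0) (hsym : ∀ i j, M i j = M j i) :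
    (Matrix.of fun i j : Fin k => if (i : ℕ) < (j : ℕ) then M i j else 0)
      + (Matrix.of fun i j : Fin k => if (i : ℕ) < (j : ℕ) then M i j else 0)ᵀ = M := by
  ext i j
  simp only [Matrix.add_apply, Matrix.transpose_apply, Matrix.of_apply]
  rcases lt_trichotomy (i : ℕ) (j : ℕ) with h | h | h
  · simp [h, not_lt.mpr h.le, Nat.not_lt.mpr h.le]
  · have : i = j := Fin.ext h
    subst this
    simp [hdiag]
  · simp [h, not_lt.mpr h.le, hsym i j]

lemma Qform_add (k : ℕ) (M : Matrix (Fin k) (Fin k) (ZMod 2))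
    (hdiag : ∀ i, M i i = 0) (hsym : ∀ i j, M i j = M j i) (x p : Fin k → ZMod 2) :
    Qform k M (x + p) = Qform k M x + Qform k M p + x ⬝ᵥ M.mulVec p := by
  set B := (Matrix.of fun i j : Fin k => if (i : ℕ) < (j : ℕ) then M i j else 0) with hB
  have h1 : p ⬝ᵥ B.mulVec x = x ⬝ᵥ Bᵀ.mulVec p := by
    rw [Matrix.dotProduct_mulVec, ← Matrix.mulVec_transpose, dotProduct_comm]
  have h2 : x ⬝ᵥ B.mulVec p + x ⬝ᵥ Bᵀ.mulVec p = x ⬝ᵥ M.mulVec p := by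
    rw [← dotProduct_add, ← Matrix.add_mulVec, Bsum k M hdiag hsym]
  unfold Qform
  rw [← hB]
  rw [Matrix.mulVec_add, dotProduct_add, add_dotProduct,
    add_dotProduct, h1]
  rw [← h2]
  ring


/-- For skew-symmetric `M, M' ∈ 𝔽₂^{k×k}` and `w, w' ∈ 𝔽₂^k`,
`⟨u_{M,w}, u_{M',w'}⟩² = 2^{−k}·∑_{p ∈ ker(M+M')} (−1)^{Q_M(p)+Q_{M'}(p)+(w+w')ᵀp}`. -/
theorem stmt_10 (k : ℕ) (M M' : Matrix (Fin k) (Fin k) (ZMod 2))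
    (hdiag : ∀ i, M i i = 0) (hsym : ∀ i j, M i j = M j i)
    (hdiag' : ∀ i, M' i i = 0) (hsym' : ∀ i j, M' i j = M' j i)
    (w w' : Fin k → ZMod 2) :
    (∑ x : Fin k → ZMod 2, kerdockVec k M w x * kerdockVec k M' w' x) ^ 2
      = ((2 : ℝ) ^ k)⁻¹ *
        ∑ p ∈ Finset.univ.filter (fun p : Fin k → ZMod 2 => (M + M').mulVec p = 0),
          (-1 : ℝ) ^ (Qform k M p + Qform k M' p + (w + w') ⬝ᵥ p).val := by
  classical
  set F : (Fin k → ZMod 2) → ZMod 2 :=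
    fun x => (Qform k M x + w ⬝ᵥ x) + (Qform k M' x + w' ⬝ᵥ x) with hF
  set G : (Fin k → ZMod 2) → ZMod 2 :=
    fun p => Qform k M p + Qform k M' p + (w + w') ⬝ᵥ p with hG
  have hs : ((Real.sqrt 2)⁻¹ : ℝ) ^ k * ((Real.sqrt 2)⁻¹) ^ k = (2 : ℝ)⁻¹ ^ k := by
    rw [← mul_pow, ← mul_inv, Real.mul_self_sqrt (by norm_num : (0:ℝ) ≤ 2)]
  have hterm : ∀ x, kerdockVec k M w x * kerdockVec k M' w' x
      = (2 : ℝ)⁻¹ ^ k * chi (F x) := by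
    intro x
    unfold kerdockVec
    calc ((Real.sqrt 2)⁻¹) ^ k * (-1 : ℝ) ^ (Qform k M x + w ⬝ᵥ x).val *
          (((Real.sqrt 2)⁻¹) ^ k * (-1 : ℝ) ^ (Qform k M' x + w' ⬝ᵥ x).val)
        = (((Real.sqrt 2)⁻¹) ^ k * ((Real.sqrt 2)⁻¹) ^ k) *
          (chi (Qform k M x + w ⬝ᵥ x) * chi (Qform k M' x + w' ⬝ᵥ x)) := by
          unfold chi; ring
      _ = (2 : ℝ)⁻¹ ^ k * chi (F x) := by rw [hs, ← chi_add, hF]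
  have key : ∀ x p : Fin k → ZMod 2,
      F x + F (x + p) = G p + x ⬝ᵥ (M + M').mulVec p := by
    intro x p
    have h2 : (2 : ZMod 2) = 0 := by decide
    simp only [hF, hG]
    rw [Qform_add k M hdiag hsym, Qform_add k M' hdiag' hsym',
      dotProduct_add w x p, dotProduct_add w' x p,
      add_dotProduct w w' p, Matrix.add_mulVec, dotProduct_add]
    linear_combination (Qform k M x + Qform k M' x + w ⬝ᵥ x + w' ⬝ᵥ x) * h2
  rw [Finset.sum_congr rfl (fun x _ => hterm x), ← Finset.mul_sum, mul_pow]
  have hT : (∑ x : Fin k → ZMod 2, chi (F x)) ^ 2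
      = (2 : ℝ) ^ k * ∑ p ∈ Finset.univ.filter
          (fun p : Fin k → ZMod 2 => (M + M').mulVec p = 0), chi (G p) := by
    rw [sq, Finset.sum_mul_sum]
    have h1 : ∀ x : Fin k → ZMod 2, ∑ y : Fin k → ZMod 2, chi (F x) * chi (F y)
        = ∑ p : Fin k → ZMod 2, chi (G p) * chi (x ⬝ᵥ (M + M').mulVec p) := by
      intro x
      rw [Fintype.sum_equiv (Equiv.addLeft x)
        (fun p => chi (G p) * chi (x ⬝ᵥ (M + M').mulVec p))
        (fun y => chi (F x) * chi (F y))
        (fun p => by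
          show chi (G p) * chi (x ⬝ᵥ (M + M') *ᵥ p) = chi (F x) * chi (F (x + p))
          rw [← chi_add, ← chi_add, ← key x p])]
    rw [Finset.sum_congr rfl (fun x _ => h1 x), Finset.sum_comm]
    have h2 : ∀ p : Fin k → ZMod 2,
        ∑ x : Fin k → ZMod 2, chi (G p) * chi (x ⬝ᵥ (M + M').mulVec p)
        = chi (G p) * (if (M + M').mulVec p = 0 then (2:ℝ) ^ k else 0) := by
      intro p
      rw [← Finset.mul_sum, sum_chi]
    rw [Finset.sum_congr rfl (fun p _ => h2 p), Finset.mul_sum, Finset.sum_filter]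
    congr 1
    ext p
    split_ifs <;> ring
  rw [hT]
  have h2k : ((2:ℝ)⁻¹ ^ k) ^ 2 * ((2:ℝ) ^ k *
      ∑ p ∈ Finset.univ.filter (fun p : Fin k → ZMod 2 => (M + M').mulVec p = 0), chi (G p))
      = ((2:ℝ) ^ k)⁻¹ *
      ∑ p ∈ Finset.univ.filter (fun p : Fin k → ZMod 2 => (M + M').mulVec p = 0), chi (G p) := by
    have hne : ((2:ℝ) ^ k) ≠ 0 := by positivity
    rw [inv_pow]
    field_simp
  rw [h2k]
  rfl
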